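/- Let w be a word over {2,3} of even height. Then w is a rop-word if and only if (i) its length is odd, say 2ℓ+1, and (ii) w admits an ℓ-pairing, i.e., the set of indices i with w_i = 3 can be partitioned into pairs of the form {j, j+ℓ} with indices taken modulo the length of w. -/

import Mathlib

/-- Height of a word is the sum of its letters. A rop-word over {2,3}: even height and
no cyclic rotation factors as `u ++ v` with equal heights. -/
def IsRopWord (w : List ℕ) : Prop :=
  (∀ a ∈ w, a = 2 ∨ a = 3) ∧ Even w.sum ∧
  ∀ (k : ℕ) (u v : List ℕ), w.rotate k = u ++ v → u.sum ≠ v.sum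

/-- A `d`-pairing of `w`: a partition of the set of indices carrying the letter 3 into
pairs `{j, (j+d) % w.length}`; `S` records the first element of each pair. -/
def HasDPairing (w : List ℕ) (d : ℕ) : Prop :=
  ∃ S : Finset ℕ,
    (∀ j ∈ S, j < w.length) ∧
    (∀ i < w.length, w.getD i 0 = 3 ↔
      (i ∈ S ∨ i ∈ S.image fun j => (j + d) % w.length)) ∧
    Disjoint S (S.image fun j => (j + d) % w.length) ∧
    Set.InjOn (fun j => (j + d) % w.length) ↑S

namespace RopAux

/-- Discrete intermediate value: even values, steps bounded below by -2. -/
lemma ivt (f : ℕ → ℤ) (hstep : ∀ i, f i - 2 ≤ f (i+1)) (hev : ∀ i, Even (f i))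
    (a b : ℕ) (hab : a ≤ b) (ha : 0 < f a) (hb : f b < 0) : ∃ c, f c = 0 := by
  classical
  have hex : ∃ m, f (a + m) < 0 := ⟨b - a, by rwa [Nat.add_sub_cancel' hab]⟩
  obtain ⟨k, hk⟩ : ∃ k, Nat.find hex = k + 1 := by
    refine Nat.exists_eq_succ_of_ne_zero ?_
    intro h
    have h2 := Nat.find_spec hex
    rw [h] at h2
    simp only [Nat.add_zero] at h2
    omega
  have hm : f (a + (k+1)) < 0 := hk ▸ Nat.find_spec hex
  have hk' : ¬ f (a + k) < 0 := Nat.find_min hex (by omega)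
  refine ⟨a + k, ?_⟩
  obtain ⟨j, hj⟩ := hev (a + k)
  have h1 := hstep (a + k)
  have h2 : a + (k+1) = (a + k) + 1 := by omega
  rw [h2] at hm
  omega

lemma ivt' (f : ℕ → ℤ) (hstep : ∀ i, f (i+1) ≤ f i + 2) (hev : ∀ i, Even (f i))
    (a b : ℕ) (hab : a ≤ b) (ha : f a < 0) (hb : 0 < f b) : ∃ c, f c = 0 := by
  obtain ⟨c, hc⟩ := ivt (fun i => -f i) (fun i => by simpa using by linarith [hstep i])
    (fun i => (hev i).neg) a b hab (by simpa using ha) (by simpa using hb)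
  exact ⟨c, by simpa using hc⟩

/-- cyclic letter access -/
def g (w : List ℕ) (i : ℕ) : ℕ := w.getD (i % w.length) 0

/-- indicator of letter 3 -/
def eps (w : List ℕ) (i : ℕ) : ℕ := if g w i = 3 then 1 else 0

/-- arc sum -/
def arc (w : List ℕ) (a t : ℕ) : ℕ := ∑ r ∈ Finset.range t, g w (a + r)

/-- arc count of 3s -/
def cnt (w : List ℕ) (a t : ℕ) : ℕ := ∑ r ∈ Finset.range t, eps w (a + r)

lemma g_mod_add (w : List ℕ) (x j : ℕ) : g w (x % w.length + j) = g w (x + j) := by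
  unfold g
  congr 1
  exact (Nat.mod_modEq x w.length).add_right j

lemma g_mod (w : List ℕ) (x : ℕ) : g w (x % w.length) = g w x := by
  simpa using g_mod_add w x 0

lemma g_add_len (w : List ℕ) (i : ℕ) : g w (i + w.length) = g w i := by
  unfold g
  rw [Nat.add_mod_right]

lemma eps_mod_add (w : List ℕ) (x j : ℕ) : eps w (x % w.length + j) = eps w (x + j) := by
  unfold eps; rw [g_mod_add]

lemma eps_add_len (w : List ℕ) (i : ℕ) : eps w (i + w.length) = eps w i := by
  unfold eps; rw [g_add_len]

lemma g23 (w : List ℕ) (hw : ∀ a ∈ w, a = 2 ∨ a = 3) (hn : 0 < w.length) (i : ℕ) :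
    g w i = 2 ∨ g w i = 3 := by
  have h : i % w.length < w.length := Nat.mod_lt _ hn
  unfold g
  rw [List.getD_eq_getElem _ _ h]
  exact hw _ (List.getElem_mem _)

lemma g_eq_eps (w : List ℕ) (hw : ∀ a ∈ w, a = 2 ∨ a = 3) (hn : 0 < w.length) (i : ℕ) :
    g w i = 2 + eps w i := by
  rcases g23 w hw hn i with h | h <;> simp [eps, h]

lemma eps_le_one (w : List ℕ) (i : ℕ) : eps w i ≤ 1 := by
  unfold eps; split <;> omega

lemma arc_add (w : List ℕ) (a t t' : ℕ) :
    arc w a (t + t') = arc w a t + arc w (a + t) t' := by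
  unfold arc
  rw [Finset.sum_range_add]
  congr 1
  exact Finset.sum_congr rfl fun r _ => by rw [Nat.add_assoc]

lemma cnt_add (w : List ℕ) (a t t' : ℕ) :
    cnt w a (t + t') = cnt w a t + cnt w (a + t) t' := by
  unfold cnt
  rw [Finset.sum_range_add]
  congr 1
  exact Finset.sum_congr rfl fun r _ => by rw [Nat.add_assoc]

lemma arc_one (w : List ℕ) (a : ℕ) : arc w a 1 = g w a := by
  simp [arc]

lemma cnt_one (w : List ℕ) (a : ℕ) : cnt w a 1 = eps w a := by
  simp [cnt]

lemma arc_mod_add (w : List ℕ) (x j t : ℕ) : arc w (x % w.length + j) t = arc w (x + j) t := by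
  unfold arc
  exact Finset.sum_congr rfl fun r _ => by
    rw [Nat.add_assoc, Nat.add_assoc, g_mod_add]

lemma arc_mod (w : List ℕ) (x t : ℕ) : arc w (x % w.length) t = arc w x t := by
  simpa using arc_mod_add w x 0 t

lemma cnt_mod_add (w : List ℕ) (x j t : ℕ) : cnt w (x % w.length + j) t = cnt w (x + j) t := by
  unfold cnt
  exact Finset.sum_congr rfl fun r _ => by
    rw [Nat.add_assoc, Nat.add_assoc, eps_mod_add]

lemma arc_step (w : List ℕ) (x t : ℕ) :
    arc w x t + g w (x + t) = g w x + arc w (x + 1) t := by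
  have h1 : arc w x (t + 1) = arc w x t + g w (x + t) := by
    rw [arc_add, arc_one]
  have h2 : arc w x (1 + t) = g w x + arc w (x + 1) t := by
    rw [arc_add, arc_one]
  rw [← h1, ← h2, Nat.add_comm t 1]

lemma cnt_step (w : List ℕ) (x t : ℕ) :
    cnt w x t + eps w (x + t) = eps w x + cnt w (x + 1) t := by
  have h1 : cnt w x (t + 1) = cnt w x t + eps w (x + t) := by
    rw [cnt_add, cnt_one]
  have h2 : cnt w x (1 + t) = eps w x + cnt w (x + 1) t := by
    rw [cnt_add, cnt_one]
  rw [← h1, ← h2, Nat.add_comm t 1]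

lemma arc_full (w : List ℕ) (x : ℕ) : arc w x w.length = arc w 0 w.length := by
  induction x with
  | zero => rfl
  | succ k ih =>
    have := arc_step w k w.length
    rw [g_add_len] at this
    omega

lemma cnt_full (w : List ℕ) (x : ℕ) : cnt w x w.length = cnt w 0 w.length := by
  induction x with
  | zero => rfl
  | succ k ih =>
    have := cnt_step w k w.length
    rw [eps_add_len] at this
    omega

lemma arc_add_len (w : List ℕ) (x t : ℕ) : arc w (x + w.length) t = arc w x t := by
  unfold arc
  exact Finset.sum_congr rfl fun r _ => by
    rw [Nat.add_right_comm, g_add_len]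

lemma list_sum_eq (w : List ℕ) : w.sum = ∑ r ∈ Finset.range w.length, w.getD r 0 := by
  induction w with
  | nil => simp
  | cons a l ih =>
    rw [List.sum_cons, List.length_cons, Finset.sum_range_succ', ih]
    simp [Nat.add_comm]

lemma sum_eq_arc (w : List ℕ) : w.sum = arc w 0 w.length := by
  rw [list_sum_eq]
  unfold arc
  exact Finset.sum_congr rfl fun r hr => by
    rw [Finset.mem_range] at hr
    simp [g, Nat.mod_eq_of_lt hr]

lemma arc_eq_cnt (w : List ℕ) (hw : ∀ a ∈ w, a = 2 ∨ a = 3) (hn : 0 < w.length) (a t : ℕ) :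
    arc w a t = 2 * t + cnt w a t := by
  unfold arc cnt
  rw [Finset.sum_congr rfl fun r _ => g_eq_eps w hw hn (a + r), Finset.sum_add_distrib]
  simp [Finset.sum_const, Nat.mul_comm]


-- sum of a prefix of a rotation is an arc sum
lemma take_rotate_sum (w : List ℕ) (k t : ℕ) (ht : t ≤ w.length) :
    ((w.rotate k).take t).sum = arc w k t := by
  set u := (w.rotate k).take t with hu
  have hlen : u.length = t := by
    rw [hu, List.length_take, List.length_rotate]
    omega
  rw [list_sum_eq, hlen, ← arc_mod w k t]
  refine Finset.sum_congr rfl fun r hr => ?_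
  rw [Finset.mem_range] at hr
  have hr1 : r < u.length := by omega
  have hr2 : r < (w.rotate k).length := by rw [List.length_rotate]; omega
  rw [List.getD_eq_getElem _ _ hr1]
  have : u[r] = (w.rotate k)[r]'hr2 := by
    simp only [hu, List.getElem_take]
  rw [this, List.getElem_rotate]
  unfold g
  have hn : 0 < w.length := by
    rcases Nat.eq_zero_or_pos w.length with h | h
    · omega
    · exact h
  congr 1
  have : (k % w.length + r) % w.length = (r + k) % w.length := by
    have h1 := (Nat.mod_modEq k w.length).add_right r
    unfold Nat.ModEq at h1
    rw [h1, Nat.add_comm]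
  rw [this, List.getD_eq_getElem _ _ (Nat.mod_lt _ hn)]

lemma rop_arc (w : List ℕ) (hr : IsRopWord w) (a t : ℕ) (ht : t ≤ w.length) :
    2 * arc w a t ≠ w.sum := by
  intro heq
  set k := a % w.length with hk
  set u := (w.rotate k).take t with hu
  set v := (w.rotate k).drop t with hv
  have huv : w.rotate k = u ++ v := (List.take_append_drop t _).symm
  have hsum : u.sum + v.sum = w.sum := by
    rw [← List.sum_append, ← huv]
    exact (w.rotate_perm k).sum_eq
  have husum : u.sum = arc w a t := by
    rw [hu, take_rotate_sum w k t ht, hk, arc_mod]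
  exact hr.2.2 k u v huv (by omega)

lemma arc_rop (w : List ℕ) (hw : ∀ a ∈ w, a = 2 ∨ a = 3) (he : Even w.sum)
    (hcond : ∀ a, ∀ t ≤ w.length, 2 * arc w a t ≠ w.sum) : IsRopWord w := by
  refine ⟨hw, he, fun k u v huv heq => ?_⟩
  have hlen : u.length + v.length = w.length := by
    have := congrArg List.length huv
    rw [List.length_rotate, List.length_append] at this
    omega
  have ht : u.length ≤ w.length := by omega
  have hsum : u.sum + v.sum = w.sum := by
    rw [← List.sum_append, ← huv]
    exact (w.rotate_perm k).sum_eq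
  have husum : u.sum = arc w k u.length := by
    rw [← take_rotate_sum w k u.length ht]
    congr 1
    rw [huv]
    exact List.take_left.symm
  exact hcond k u.length ht (by omega)

/-- The IVT step bounds for the function `2 * arc · m - sum`. -/
lemma fsteps (w : List ℕ) (hw : ∀ a ∈ w, a = 2 ∨ a = 3) (hn : 0 < w.length) (m : ℕ) (i : ℕ) :
    (2 * (arc w i m : ℤ) - w.sum) - 2 ≤ 2 * (arc w (i+1) m : ℤ) - w.sum ∧
    2 * (arc w (i+1) m : ℤ) - w.sum ≤ (2 * (arc w i m : ℤ) - w.sum) + 2 := by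
  have h := arc_step w i m
  rcases g23 w hw hn i with h1 | h1 <;> rcases g23 w hw hn (i + m) with h2 | h2 <;>
    rw [h1, h2] at h <;> constructor <;> omega

lemma feven (w : List ℕ) (he : Even w.sum) (m i : ℕ) :
    Even (2 * (arc w i m : ℤ) - w.sum) := by
  obtain ⟨j, hj⟩ := he
  exact ⟨(arc w i m : ℤ) - j, by rw [hj]; push_cast; ring⟩

/-- If some `2*arc > sum` and some `2*arc < sum` (length-m arcs), then some equals. -/
lemma cross (w : List ℕ) (hw : ∀ a ∈ w, a = 2 ∨ a = 3) (he : Even w.sum)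
    (hn : 0 < w.length) (m x a : ℕ) (hx : w.sum < 2 * arc w x m)
    (ha : 2 * arc w a m < w.sum) : ∃ c, 2 * arc w c m = w.sum := by
  set f : ℕ → ℤ := fun i => 2 * (arc w i m : ℤ) - w.sum with hf
  have hb : f (a + w.length * (x + 1)) < 0 := by
    have harc : arc w (a + w.length * (x+1)) m = arc w a m := by
      induction (x+1) with
      | zero => simp
      | succ k ih =>
        rw [Nat.mul_succ, ← Nat.add_assoc, arc_add_len, ih]
    simp only [hf, harc]
    omega
  have hxb : x ≤ a + w.length * (x + 1) := by nlinarith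
  obtain ⟨c, hc⟩ := ivt f (fun i => (fsteps w hw hn m i).1) (feven w he m)
    x _ hxb (by simp only [hf]; omega) hb
  refine ⟨c, ?_⟩
  simp only [hf] at hc
  omega

/-- A rop-word has odd length. -/
lemma rop_odd (w : List ℕ) (hw : ∀ a ∈ w, a = 2 ∨ a = 3) (he : Even w.sum)
    (hra : ∀ a, ∀ t ≤ w.length, 2 * arc w a t ≠ w.sum) : Odd w.length := by
  rw [Nat.odd_iff, ← Nat.not_even_iff]
  intro hev
  obtain ⟨m, hm⟩ := hev
  have hsplit : arc w 0 m + arc w m m = w.sum := by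
    rw [sum_eq_arc]
    conv_rhs => rw [show w.length = m + m by omega]
    rw [arc_add, Nat.zero_add]
  have hne0 : 2 * arc w 0 m ≠ w.sum := hra 0 m (by omega)
  have hnem : 2 * arc w m m ≠ w.sum := hra m m (by omega)
  have hn : 0 < w.length := by
    rcases Nat.eq_zero_or_pos w.length with h | h
    · exfalso
      have hm0 : m = 0 := by omega
      have ha0 : arc w 0 0 = 0 := by simp [arc]
      have hs0 : w.sum = 0 := by rw [sum_eq_arc, h, ha0]
      apply hne0
      rw [hm0, ha0, hs0]
    · exact h
  rcases Nat.lt_or_ge (2 * arc w 0 m) w.sum with h0 | h0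
  · have hm' : w.sum < 2 * arc w m m := by omega
    obtain ⟨c, hc⟩ := cross w hw he hn m m 0 hm' h0
    exact hra c m (by omega) hc
  · have h0' : w.sum < 2 * arc w 0 m := by omega
    have hm' : 2 * arc w m m < w.sum := by omega
    obtain ⟨c, hc⟩ := cross w hw he hn m 0 m h0' hm'
    exact hra c m (by omega) hc

/-- In a rop-word of length 2ℓ+1, every length-ℓ arc has doubled sum < total. -/
lemma key_lt (w : List ℕ) (hw : ∀ a ∈ w, a = 2 ∨ a = 3) (he : Even w.sum) (ℓ : ℕ)
    (hlen : w.length = 2 * ℓ + 1)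
    (hra : ∀ a, ∀ t ≤ w.length, 2 * arc w a t ≠ w.sum) (x : ℕ) :
    2 * arc w x ℓ < w.sum := by
  have hn : 0 < w.length := by omega
  have hl : ℓ ≤ w.length := by omega
  -- total of all length-ℓ arc sums over one period
  have htot : ∑ a ∈ Finset.range w.length, arc w a ℓ = ℓ * w.sum := by
    unfold arc
    rw [Finset.sum_comm]
    have hcol : ∀ r ∈ Finset.range ℓ, ∑ a ∈ Finset.range w.length, g w (a + r) = w.sum := by
      intro r _
      rw [sum_eq_arc, ← arc_full w r]
      unfold arc
      exact Finset.sum_congr rfl fun a _ => by rw [Nat.add_comm]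
    rw [Finset.sum_congr rfl hcol, Finset.sum_const, Finset.card_range, smul_eq_mul]
  -- some small arc
  have hsmall : ∃ a, 2 * arc w a ℓ < w.sum := by
    by_contra hno
    push_neg at hno
    have hall : ∀ a ∈ Finset.range w.length, w.sum + 1 ≤ 2 * arc w a ℓ := by
      intro a _
      have := hra a ℓ hl
      have := hno a
      omega
    have hsum := Finset.sum_le_sum hall
    rw [Finset.sum_const, Finset.card_range, smul_eq_mul, ← Finset.mul_sum, htot] at hsum
    rw [hlen] at hsum
    have hexp : (2 * ℓ + 1) * (w.sum + 1) = 2 * (ℓ * w.sum) + 2 * ℓ + w.sum + 1 := by ring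
    omega
  obtain ⟨a, ha⟩ := hsmall
  rcases Nat.lt_or_ge (2 * arc w x ℓ) w.sum with h | h
  · exact h
  · exfalso
    have hx : w.sum < 2 * arc w x ℓ := by
      have := hra x ℓ hl
      omega
    obtain ⟨c, hc⟩ := cross w hw he hn ℓ x a hx ha
    exact hra c ℓ hl hc


section
variable (w : List ℕ) (hw : ∀ a ∈ w, a = 2 ∨ a = 3) (he : Even w.sum) (ℓ : ℕ)
  (hlen : w.length = 2 * ℓ + 1)
  (hra : ∀ a, ∀ t ≤ w.length, 2 * arc w a t ≠ w.sum)

local notation "s" => cnt w 0 w.length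

include hw in
lemma sum_2n_s (hn : 0 < w.length) : w.sum = 2 * w.length + s := by
  rw [sum_eq_arc, arc_eq_cnt w hw hn]

include hw he in
lemma s_even (hn : 0 < w.length) : Even s := by
  have h := sum_2n_s w hw hn
  obtain ⟨j, hj⟩ := he
  rw [Nat.even_iff]
  omega

include hlen in
lemma F4 (x : ℕ) : cnt w x ℓ + eps w (x + ℓ) + cnt w (x + ℓ + 1) ℓ = s := by
  have h : cnt w x (ℓ + (1 + ℓ)) = cnt w x ℓ + (cnt w (x + ℓ) 1 + cnt w (x + ℓ + 1) ℓ) := by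
    rw [cnt_add, cnt_add]
  rw [cnt_one] at h
  have hn : ℓ + (1 + ℓ) = w.length := by omega
  rw [hn, cnt_full] at h
  omega

lemma F3 (x : ℕ) : cnt w x ℓ + eps w (x + ℓ) = eps w x + cnt w (x + 1) ℓ :=
  cnt_step w x ℓ

include hw he hlen hra in
lemma F1 (x : ℕ) : 2 * cnt w x ℓ ≤ s := by
  have hn : 0 < w.length := by omega
  have h := key_lt w hw he ℓ hlen hra x
  rw [arc_eq_cnt w hw hn] at h
  have hsum := sum_2n_s w hw hn
  have hse := s_even w hw he hn
  rw [Nat.even_iff] at hse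
  omega

include hw he hlen hra in
lemma F2 (x : ℕ) : s ≤ 2 * (cnt w x ℓ + eps w (x + ℓ)) := by
  have hn : 0 < w.length := by omega
  have hsplit : arc w x (ℓ + 1) + arc w (x + (ℓ + 1)) ℓ = w.sum := by
    have h : arc w x ((ℓ + 1) + ℓ) = arc w x (ℓ + 1) + arc w (x + (ℓ + 1)) ℓ := arc_add ..
    have hn' : (ℓ + 1) + ℓ = w.length := by omega
    rw [hn', arc_full] at h
    rw [← sum_eq_arc] at h
    omega
  have hk := key_lt w hw he ℓ hlen hra (x + (ℓ + 1))
  have hgt : w.sum < 2 * arc w x (ℓ + 1) := by omega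
  rw [arc_eq_cnt w hw hn] at hgt
  have hsum := sum_2n_s w hw hn
  have hcnt : cnt w x (ℓ + 1) = cnt w x ℓ + eps w (x + ℓ) := by
    rw [cnt_add, cnt_one]
  rw [hcnt] at hgt
  have hse := s_even w hw he hn
  rw [Nat.even_iff] at hse
  omega

include hw he hlen hra in
lemma D1 (p : ℕ) (h3 : eps w p = 1) (hc : 2 * cnt w (p + 1) ℓ = s) :
    eps w (p + ℓ) = 1 ∧ 2 * cnt w (p + ℓ + 1) ℓ + 2 = s := by
  have h1 := F1 w hw he ℓ hlen hra p
  have h3' := F3 w ℓ p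
  have he1 := eps_le_one w (p + ℓ)
  have heps : eps w (p + ℓ) = 1 ∧ 2 * cnt w p ℓ = s := by omega
  have h4 := F4 w ℓ hlen p
  exact ⟨heps.1, by omega⟩

include hw he hlen hra in
lemma D2 (q : ℕ) (h3 : eps w q = 1) (hc : 2 * cnt w (q + 1) ℓ ≠ s) :
    eps w (q + ℓ + 1) = 1 ∧ 2 * cnt w (q + ℓ + 2) ℓ = s := by
  have hn : 0 < w.length := by omega
  have h1 := F1 w hw he ℓ hlen hra (q + 1)
  have h2 := F2 w hw he ℓ hlen hra (q + 1)
  have he1 := eps_le_one w (q + 1 + ℓ)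
  have hse := s_even w hw he hn
  rw [Nat.even_iff] at hse
  have heq : q + 1 + ℓ = q + ℓ + 1 := by omega
  rw [heq] at h2 he1
  have heps : eps w (q + ℓ + 1) = 1 ∧ 2 * cnt w (q + 1) ℓ + 2 = s := by omega
  have h4 := F4 w ℓ hlen (q + 1)
  rw [heq] at h4
  have heq2 : q + ℓ + 1 + 1 = q + ℓ + 2 := by omega
  rw [heq2] at h4
  exact ⟨heps.1, by omega⟩

lemma eps_one_iff (i : ℕ) : eps w i = 1 ↔ g w i = 3 := by
  unfold eps
  split
  · simp_all
  · simp_all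

lemma eps_mod_self (x : ℕ) : eps w (x % w.length) = eps w x := by
  simpa using eps_mod_add w x 0

include hw he hlen hra in
lemma pairing_exists : HasDPairing w ℓ := by
  have hn : 0 < w.length := by omega
  refine ⟨(Finset.range w.length).filter
      (fun p => eps w p = 1 ∧ 2 * cnt w (p + 1) ℓ = s), fun j hj => ?_, ?_, ?_, ?_⟩
  · exact Finset.mem_range.mp (Finset.mem_filter.mp hj).1
  · intro i hi
    have hgi : w.getD i 0 = g w i := by unfold g; rw [Nat.mod_eq_of_lt hi]
    constructor
    · intro h3
      have hei : eps w i = 1 := (eps_one_iff w i).mpr (by rw [← hgi]; exact h3)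
      by_cases hc : 2 * cnt w (i + 1) ℓ = s
      · exact Or.inl (Finset.mem_filter.mpr ⟨Finset.mem_range.mpr hi, hei, hc⟩)
      · right
        obtain ⟨he3, hc2⟩ := D2 w hw he ℓ hlen hra i hei hc
        refine Finset.mem_image.mpr ⟨(i + ℓ + 1) % w.length, ?_, ?_⟩
        · refine Finset.mem_filter.mpr ⟨Finset.mem_range.mpr (Nat.mod_lt _ hn), ?_, ?_⟩
          · rw [eps_mod_self]; exact he3
          · rw [cnt_mod_add]
            have : i + ℓ + 1 + 1 = i + ℓ + 2 := by omega
            rw [this]; exact hc2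
        · have h1 : ((i + ℓ + 1) % w.length + ℓ) % w.length
              = (i + ℓ + 1 + ℓ) % w.length := (Nat.mod_modEq (i + ℓ + 1) w.length).add_right ℓ
          have h2 : i + ℓ + 1 + ℓ = i + w.length := by omega
          rw [h1, h2, Nat.add_mod_right, Nat.mod_eq_of_lt hi]
    · intro h
      rw [hgi]
      rcases h with hS | hI
      · obtain ⟨-, hei, -⟩ := Finset.mem_filter.mp hS
        exact (eps_one_iff w i).mp hei
      · obtain ⟨j, hjS, hji⟩ := Finset.mem_image.mp hI
        obtain ⟨-, hej, hcj⟩ := Finset.mem_filter.mp hjS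
        obtain ⟨he3, -⟩ := D1 w hw he ℓ hlen hra j hej hcj
        rw [← hji]
        exact (eps_one_iff w _).mp (by rw [eps_mod_self]; exact he3)
  · rw [Finset.disjoint_left]
    intro i hiS hiI
    obtain ⟨-, -, hci⟩ := Finset.mem_filter.mp hiS
    obtain ⟨j, hjS, hji⟩ := Finset.mem_image.mp hiI
    obtain ⟨-, hej, hcj⟩ := Finset.mem_filter.mp hjS
    obtain ⟨-, hc2⟩ := D1 w hw he ℓ hlen hra j hej hcj
    have hcc : cnt w (i + 1) ℓ = cnt w (j + ℓ + 1) ℓ := by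
      rw [← hji, cnt_mod_add]
    omega
  · intro a ha b hb hab
    simp only at hab
    have haR : a < w.length :=
      Finset.mem_range.mp (Finset.mem_filter.mp (Finset.mem_coe.mp ha)).1
    have hbR : b < w.length :=
      Finset.mem_range.mp (Finset.mem_filter.mp (Finset.mem_coe.mp hb)).1
    have h1 : Nat.ModEq w.length (a + ℓ) (b + ℓ) := hab
    have h2 : Nat.ModEq w.length a b := h1.add_right_cancel' ℓ
    unfold Nat.ModEq at h2
    rwa [Nat.mod_eq_of_lt haR, Nat.mod_eq_of_lt hbR] at h2
end


section
variable (w : List ℕ) (hw : ∀ a ∈ w, a = 2 ∨ a = 3) (ℓ : ℕ)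
  (hlen : w.length = 2 * ℓ + 1)

local notation "s" => cnt w 0 w.length

/-- total number of 3s equals the cardinality of the 3-position set -/
lemma cnt_card : cnt w 0 w.length
    = ((Finset.range w.length).filter (fun i => g w i = 3)).card := by
  rw [Finset.card_filter]
  unfold cnt eps
  exact Finset.sum_congr rfl fun r _ => by rw [Nat.zero_add]

/-- count of 3s in an arc as a card -/
lemma cnt_card' (a t : ℕ) : cnt w a t
    = ((Finset.range t).filter (fun r => g w (a + r) = 3)).card := by
  rw [Finset.card_filter]
  unfold cnt eps
  rfl

include hlen in
lemma pairing_cnt_le (S : Finset ℕ)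
    (hS1 : ∀ j ∈ S, j < w.length)
    (hS2 : ∀ i < w.length, w.getD i 0 = 3 ↔
      (i ∈ S ∨ i ∈ S.image fun j => (j + ℓ) % w.length))
    (a t : ℕ) (ht : t ≤ ℓ) :
    cnt w a t ≤ S.card := by
  classical
  have hn : 0 < w.length := by omega
  have hg3 : ∀ x, g w x = 3 → (x % w.length ∈ S ∨
      (x % w.length) ∈ S.image fun j => (j + ℓ) % w.length) := by
    intro x hx
    refine (hS2 (x % w.length) (Nat.mod_lt _ hn)).mp ?_
    unfold g at hx
    rwa [List.getD_eq_getElem _ _ (Nat.mod_lt x hn),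
      ← List.getD_eq_getElem _ 0 (Nat.mod_lt x hn)] at hx
  rw [cnt_card']
  set F := (Finset.range t).filter (fun r => g w (a + r) = 3) with hF
  set ψ : ℕ → ℕ := fun r =>
    if (a + r) % w.length ∈ S then (a + r) % w.length
    else if h : ∃ j, j ∈ S ∧ (j + ℓ) % w.length = (a + r) % w.length then h.choose
    else 0 with hψ
  have hmem : ∀ r ∈ F, ψ r ∈ S := by
    intro r hr
    obtain ⟨hrt, hr3⟩ := Finset.mem_filter.mp hr
    by_cases hcase : (a + r) % w.length ∈ S
    · simp only [hψ, if_pos hcase]; exact hcase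
    · rcases hg3 (a + r) hr3 with h | h
      · exact absurd h hcase
      · obtain ⟨j, hj, hji⟩ := Finset.mem_image.mp h
        have hex : ∃ j, j ∈ S ∧ (j + ℓ) % w.length = (a + r) % w.length := ⟨j, hj, hji⟩
        simp only [hψ, if_neg hcase, dif_pos hex]
        exact hex.choose_spec.1
  -- key congruence helper
  have hkey : ∀ r r', r < t → r' < t →
      (a + r + ℓ) % w.length = (a + r') % w.length → False := by
    intro r r' hrt hr't hmod
    have h1 : Nat.ModEq w.length (r + ℓ) r' := by
      have : Nat.ModEq w.length (a + (r + ℓ)) (a + r') := by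
        rw [Nat.ModEq, ← Nat.add_assoc, hmod]
      exact this.add_left_cancel' a
    unfold Nat.ModEq at h1
    rw [Nat.mod_eq_of_lt (by omega), Nat.mod_eq_of_lt (by omega)] at h1
    omega
  have heqmod : ∀ r r', r < t → r' < t →
      (a + r) % w.length = (a + r') % w.length → r = r' := by
    intro r r' hrt hr't hmod
    have h1 : Nat.ModEq w.length r r' := by
      have h0 : Nat.ModEq w.length (a + r) (a + r') := hmod
      exact h0.add_left_cancel' a
    unfold Nat.ModEq at h1
    rw [Nat.mod_eq_of_lt (by omega), Nat.mod_eq_of_lt (by omega)] at h1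
    exact h1
  have hinj : Set.InjOn ψ ↑F := by
    intro r hr r' hr' hrr
    obtain ⟨hrt, hr3⟩ := Finset.mem_filter.mp (Finset.mem_coe.mp hr)
    obtain ⟨hr't, hr'3⟩ := Finset.mem_filter.mp (Finset.mem_coe.mp hr')
    rw [Finset.mem_range] at hrt hr't
    by_cases hc1 : (a + r) % w.length ∈ S <;>
      by_cases hc2 : (a + r') % w.length ∈ S
    · simp only [hψ, if_pos hc1, if_pos hc2] at hrr
      exact heqmod r r' hrt hr't hrr
    · -- r in S branch, r' in image branch
      rcases hg3 (a + r') hr'3 with h | h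
      · exact absurd h hc2
      obtain ⟨j, hj, hji⟩ := Finset.mem_image.mp h
      have hex : ∃ j, j ∈ S ∧ (j + ℓ) % w.length = (a + r') % w.length := ⟨j, hj, hji⟩
      simp only [hψ, if_pos hc1, if_neg hc2, dif_pos hex] at hrr
      have hspec := hex.choose_spec.2
      rw [← hrr] at hspec
      -- (((a+r) % n) + ℓ) % n = (a + r') % n
      exfalso
      apply hkey r r' hrt hr't
      have : ((a + r) % w.length + ℓ) % w.length = (a + r + ℓ) % w.length :=
        (Nat.mod_modEq (a + r) w.length).add_right ℓ
      rw [← this]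
      exact hspec
    · rcases hg3 (a + r) hr3 with h | h
      · exact absurd h hc1
      obtain ⟨j, hj, hji⟩ := Finset.mem_image.mp h
      have hex : ∃ j, j ∈ S ∧ (j + ℓ) % w.length = (a + r) % w.length := ⟨j, hj, hji⟩
      simp only [hψ, if_neg hc1, if_pos hc2, dif_pos hex] at hrr
      have hspec := hex.choose_spec.2
      rw [hrr] at hspec
      exfalso
      apply hkey r' r hr't hrt
      have : ((a + r') % w.length + ℓ) % w.length = (a + r' + ℓ) % w.length :=
        (Nat.mod_modEq (a + r') w.length).add_right ℓ
      rw [← this]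
      exact hspec
    · rcases hg3 (a + r) hr3 with h | h
      · exact absurd h hc1
      rcases hg3 (a + r') hr'3 with h' | h'
      · exact absurd h' hc2
      obtain ⟨j, hj, hji⟩ := Finset.mem_image.mp h
      obtain ⟨j', hj', hji'⟩ := Finset.mem_image.mp h'
      have hex : ∃ j, j ∈ S ∧ (j + ℓ) % w.length = (a + r) % w.length := ⟨j, hj, hji⟩
      have hex' : ∃ j, j ∈ S ∧ (j + ℓ) % w.length = (a + r') % w.length := ⟨j', hj', hji'⟩
      simp only [hψ, if_neg hc1, if_neg hc2, dif_pos hex, dif_pos hex'] at hrr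
      have h1 := hex.choose_spec.2
      have h2 := hex'.choose_spec.2
      rw [hrr] at h1
      rw [h1] at h2
      exact heqmod r r' hrt hr't h2
  exact Finset.card_le_card_of_injOn ψ hmem hinj

include hw hlen in
lemma pairing_arc (hp : HasDPairing w ℓ) :
    ∀ a, ∀ t ≤ w.length, 2 * arc w a t ≠ w.sum := by
  classical
  obtain ⟨S, hS1, hS2, hS3, hS4⟩ := hp
  have hn : 0 < w.length := by omega
  have hscard : s = 2 * S.card := by
    rw [cnt_card]
    have hset : (Finset.range w.length).filter (fun i => g w i = 3)
        = S ∪ S.image (fun j => (j + ℓ) % w.length) := by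
      ext i
      simp only [Finset.mem_filter, Finset.mem_range, Finset.mem_union]
      constructor
      · rintro ⟨hi, h3⟩
        refine (hS2 i hi).mp ?_
        unfold g at h3
        rwa [Nat.mod_eq_of_lt hi] at h3
      · intro h
        have hi : i < w.length := by
          rcases h with h | h
          · exact hS1 i h
          · obtain ⟨j, -, hji⟩ := Finset.mem_image.mp h
            rw [← hji]; exact Nat.mod_lt _ hn
        refine ⟨hi, ?_⟩
        have h3 := (hS2 i hi).mpr h
        unfold g
        rwa [Nat.mod_eq_of_lt hi]
    rw [hset, Finset.card_union_of_disjoint hS3, Finset.card_image_of_injOn hS4]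
    omega
  have hcnt : ∀ a t, t ≤ ℓ → 2 * cnt w a t ≤ s := by
    intro a t ht
    have := pairing_cnt_le w ℓ hlen S hS1 hS2 a t ht
    omega
  have hsum : w.sum = 2 * w.length + s := by
    rw [sum_eq_arc, arc_eq_cnt w hw hn]
  have hhalf : ∀ a t, t ≤ ℓ → 2 * arc w a t < w.sum := by
    intro a t ht
    rw [arc_eq_cnt w hw hn]
    have := hcnt a t ht
    omega
  intro a t ht heq
  rcases le_or_gt t ℓ with h | h
  · have := hhalf a t h
    omega
  · have hsplit : arc w a t + arc w (a + t) (w.length - t) = w.sum := by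
      have hadd := arc_add w a t (w.length - t)
      rw [show t + (w.length - t) = w.length by omega] at hadd
      rw [arc_full, ← sum_eq_arc] at hadd
      omega
    have := hhalf (a + t) (w.length - t) (by omega)
    omega
end


end RopAux

/-- Bouchet: a word over {2,3} of even height is a rop-word iff its length is odd,
say `2*ℓ+1`, and it admits an `ℓ`-pairing. -/
theorem stmt_6 (w : List ℕ) (hw : ∀ a ∈ w, a = 2 ∨ a = 3) (he : Even w.sum) :
    IsRopWord w ↔ ∃ ℓ : ℕ, w.length = 2 * ℓ + 1 ∧ HasDPairing w ℓ := by
  constructor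
  · intro hr
    have hra : ∀ a, ∀ t ≤ w.length, 2 * RopAux.arc w a t ≠ w.sum :=
      fun a t ht => RopAux.rop_arc w hr a t ht
    obtain ⟨ℓ, hlen'⟩ := RopAux.rop_odd w hw he hra
    have hlen : w.length = 2 * ℓ + 1 := by omega
    exact ⟨ℓ, hlen, RopAux.pairing_exists w hw he ℓ hlen hra⟩
  · rintro ⟨ℓ, hlen, hp⟩
    exact RopAux.arc_rop w hw he (RopAux.pairing_arc w hw ℓ hlen hp)
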